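/- If f : G → H satisfies (J1) with f(e) = 0, and g ∈ G is a product of finitely many involutions, then 2f(g) = 0. -/

import Mathlib

theorem stmt_7 {G H : Type*} [Group G] [AddCommGroup H] (f : G → H)
    (hJ : ∀ x y : G, f (x * y) + f (x * y⁻¹) = 2 • f x) (he : f 1 = 0)
    (l : List G) (hl : ∀ i ∈ l, i ^ 2 = 1) : 2 • f l.prod = 0 := by
  suffices h : ∀ l : List G, (∀ i ∈ l, i ^ 2 = 1) → ∀ x, 2 • f (x * l.prod) = 2 • f x by
    have := h l hl 1
    simpa [he] using this
  intro l
  induction l with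
  | nil => intro _ x; simp
  | cons i t ih =>
    intro h x
    have hi2 : i * i = 1 := by
      have := h i List.mem_cons_self; rwa [pow_two] at this
    have hi : i⁻¹ = i := inv_eq_of_mul_eq_one_left hi2
    have key : 2 • f (x * i) = 2 • f x := by
      have hx := hJ x i
      rw [hi] at hx
      rw [two_smul]
      exact hx
    have ht := ih (fun j hj => h j (List.mem_cons_of_mem _ hj)) (x * i)
    rw [List.prod_cons, ← mul_assoc]
    rw [ht, key]
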